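/- Let ε > 0, K ∈ ℕ+, δ ∈ (0, 1/(3K)], let f ∈ C([0,1]^d), and let g : ℝ^d → ℝ be any function with |g(x) − f(x)| ≤ ε for every x ∈ [0,1]^d \ Ω([0,1]^d, K, δ). Define φ_0 := g and, for i = 0, 1, …, d−1, φ_{i+1}(x) := mid(φ_i(x − δ e_{i+1}), φ_i(x), φ_i(x + δ e_{i+1})), where e_1, …, e_d is the standard basis of ℝ^d. Then the function φ := φ_d satisfies |φ(x) − f(x)| ≤ ε + d·ω_f(δ) for every x ∈ [0,1]^d. -/

import Mathlib

noncomputable section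

/-- the middle (median) value of three reals. -/
def mid (a b c : ℝ) : ℝ := a + b + c - max (max a b) c - min (min a b) c

/-- the unit cube `[0,1]^d`. -/
def unitCube (d : ℕ) : Set (Fin d → ℝ) := Set.Icc 0 1

/-- the trifling region `Ω([0,1]^d, K, δ)`. -/
def trifling (d K : ℕ) (δ : ℝ) : Set (Fin d → ℝ) :=
  {x | x ∈ unitCube d ∧ ∃ i : Fin d, ∃ k : ℕ, 1 ≤ k ∧ k ≤ K - 1 ∧
        x i ∈ Set.Ioo ((k : ℝ) / K - δ) ((k : ℝ) / K)}

/-- the modulus of continuity of `f` on `[0,1]^d` (w.r.t. the Euclidean norm). -/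
def modCont (d : ℕ) (f : (Fin d → ℝ) → ℝ) (r : ℝ) : ℝ :=
  sSup {t | ∃ x ∈ unitCube d, ∃ y ∈ unitCube d,
        Real.sqrt (∑ i, (x i - y i) ^ 2) ≤ r ∧ t = |f x - f y|}

/-- `midSeq d δ g i` is the function `φ_i` obtained from `φ_0 = g` by taking medians of
three copies shifted by `±δ` along the `(i+1)`-st coordinate direction. -/
def midSeq (d : ℕ) (δ : ℝ) (g : (Fin d → ℝ) → ℝ) : ℕ → (Fin d → ℝ) → ℝ
  | 0 => g
  | i + 1 => fun x =>
      mid (midSeq d δ g i (fun j => x j - if (j : ℕ) = i then δ else 0))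
          (midSeq d δ g i x)
          (midSeq d δ g i (fun j => x j + if (j : ℕ) = i then δ else 0))

/-- a real number is "good" if it is in `[0,1]` and avoids all bad intervals. -/
def Good (K : ℕ) (δ s : ℝ) : Prop :=
  0 ≤ s ∧ s ≤ 1 ∧ ∀ k : ℕ, 1 ≤ k → k ≤ K - 1 → s ≤ (k : ℝ) / K - δ ∨ (k : ℝ) / K ≤ s

lemma two_good {K : ℕ} (hK : 0 < K) {δ t : ℝ} (hδ0 : 0 < δ) (hδ1 : δ ≤ 1 / (3 * K))
    (ht0 : 0 ≤ t) (ht1 : t ≤ 1) :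
    (Good K δ (t - δ) ∧ Good K δ t) ∨ (Good K δ (t - δ) ∧ Good K δ (t + δ)) ∨
      (Good K δ t ∧ Good K δ (t + δ)) := by
  have hKR : (0:ℝ) < K := Nat.cast_pos.mpr hK
  have h3 : 3 * δ ≤ 1 / K := by
    have h := mul_le_mul_of_nonneg_left hδ1 (by norm_num : (0:ℝ) ≤ 3)
    have h2 : 3 * (1 / (3 * (K:ℝ))) = 1 / K := by field_simp
    linarith
  have hK1 : (1:ℝ) ≤ K := Nat.one_le_cast.mpr hK
  have h1K : 1 / (K:ℝ) ≤ 1 := by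
    rw [div_le_one hKR]; exact hK1
  have hδ3 : δ ≤ 1 / 3 := by linarith
  have hval : ∀ k : ℕ, 1 ≤ k → k ≤ K - 1 → 3 * δ ≤ (k:ℝ)/K ∧ (k:ℝ)/K ≤ 1 - 3*δ := by
    intro k hk1 hk2
    have hc1 : (1:ℝ) ≤ k := Nat.one_le_cast.mpr hk1
    have hc2 : (k:ℝ) + 1 ≤ K := by exact_mod_cast (by omega : k + 1 ≤ K)
    have e1 : 1 / (K:ℝ) ≤ (k:ℝ)/K := by gcongr
    have e2 : (k:ℝ)/K ≤ ((K:ℝ) - 1)/K := by gcongr; linarith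
    have e3 : ((K:ℝ) - 1)/K = 1 - 1/K := by field_simp
    constructor <;> [linarith; linarith [e3 ▸ e2]]
  have hsucc : ∀ k k' : ℕ, k + 1 ≤ k' → (k:ℝ)/K + 1/K ≤ (k':ℝ)/K := by
    intro k k' h
    rw [← add_div]
    gcongr
    exact_mod_cast h
  by_cases hc1 : t < δ
  · right; right
    refine ⟨⟨ht0, ht1, ?_⟩, ⟨by linarith, by linarith, ?_⟩⟩ <;>
      (intro k hk1 hk2; left; obtain ⟨h, _⟩ := hval k hk1 hk2; linarith)
  by_cases hc2 : 1 - δ < t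
  · left
    refine ⟨⟨by linarith, by linarith, ?_⟩, ⟨ht0, ht1, ?_⟩⟩ <;>
      (intro k hk1 hk2; right; have := hval k hk1 hk2; linarith)
  push_neg at hc1 hc2
  by_cases hbm : ∃ k : ℕ, 1 ≤ k ∧ k ≤ K - 1 ∧ (k:ℝ)/K - δ < t - δ ∧ t - δ < (k:ℝ)/K
  · obtain ⟨k, hk1, hk2, hlo, hhi⟩ := hbm
    right; right
    have hv := hval k hk1 hk2
    have step : ∀ s : ℝ, (k:ℝ)/K < s → s ≤ (k:ℝ)/K + 2*δ →
        ∀ k' : ℕ, 1 ≤ k' → k' ≤ K - 1 → s ≤ (k':ℝ)/K - δ ∨ (k':ℝ)/K ≤ s := by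
      intro s hs1 hs2 k' hk1' hk2'
      rcases le_or_gt k' k with h | h
      · right
        have : (k':ℝ)/K ≤ (k:ℝ)/K := by have hc := (Nat.cast_le (α := ℝ)).mpr h; gcongr
        linarith
      · left
        have := hsucc k k' h
        linarith
    exact ⟨⟨ht0, ht1, step t (by linarith) (by linarith)⟩,
      ⟨by linarith, by linarith, step (t+δ) (by linarith) (by linarith)⟩⟩
  by_cases hbp : ∃ k : ℕ, 1 ≤ k ∧ k ≤ K - 1 ∧ (k:ℝ)/K - δ < t + δ ∧ t + δ < (k:ℝ)/K
  · obtain ⟨k, hk1, hk2, hlo, hhi⟩ := hbp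
    left
    have hv := hval k hk1 hk2
    have step : ∀ s : ℝ, (k:ℝ)/K - 3*δ ≤ s → s < (k:ℝ)/K - δ →
        ∀ k' : ℕ, 1 ≤ k' → k' ≤ K - 1 → s ≤ (k':ℝ)/K - δ ∨ (k':ℝ)/K ≤ s := by
      intro s hs1 hs2 k' hk1' hk2'
      rcases le_or_gt k k' with h | h
      · left
        have : (k:ℝ)/K ≤ (k':ℝ)/K := by have hc := (Nat.cast_le (α := ℝ)).mpr h; gcongr
        linarith
      · right
        have := hsucc k' k h
        linarith
    exact ⟨⟨by linarith, by linarith, step (t-δ) (by linarith) (by linarith)⟩,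
      ⟨ht0, ht1, step t (by linarith) (by linarith)⟩⟩
  · right; left
    refine ⟨⟨by linarith, by linarith, ?_⟩, ⟨by linarith, by linarith, ?_⟩⟩
    · intro k hk1 hk2
      rcases le_or_gt (t - δ) ((k:ℝ)/K - δ) with h | h
      · exact Or.inl h
      · right
        by_contra h'
        push_neg at h'
        exact hbm ⟨k, hk1, hk2, h, h'⟩
    · intro k hk1 hk2
      rcases le_or_gt (t + δ) ((k:ℝ)/K - δ) with h | h
      · exact Or.inl h
      · right
        by_contra h'
        push_neg at h'
        exact hbp ⟨k, hk1, hk2, h, h'⟩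

lemma mid_swap₁ (a b c : ℝ) : mid a b c = mid b a c := by
  simp [mid, max_comm, min_comm]; ring

lemma mid_swap₂ (a b c : ℝ) : mid a b c = mid a c b := by
  simp [mid, max_assoc, max_comm, max_left_comm, min_assoc, min_comm, min_left_comm]
  ring

lemma mid_mem {L U a b c : ℝ} (ha : L ≤ a) (ha' : a ≤ U) (hb : L ≤ b) (hb' : b ≤ U) :
    L ≤ mid a b c ∧ mid a b c ≤ U := by
  unfold mid
  rcases le_total a b with h1 | h1 <;> rcases le_total b c with h2 | h2 <;>
    rcases le_total a c with h3 | h3 <;>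
    simp [max_def, min_def, h1, h2, h3] <;>
    constructor <;> linarith

/-- Lemma 3.4: from an approximation valid outside the trifling region, `d` successive
median-of-shifts constructions give an approximation valid on all of `[0,1]^d`. -/
theorem mid_shift_extension_multi_dim
    (d : ℕ) (hd : 0 < d) (ε : ℝ) (hε : 0 < ε) (K : ℕ) (hK : 0 < K)
    (δ : ℝ) (hδ0 : 0 < δ) (hδ1 : δ ≤ 1 / (3 * K))
    (f : (Fin d → ℝ) → ℝ) (hf : ContinuousOn f (unitCube d))
    (g : (Fin d → ℝ) → ℝ)
    (hg : ∀ x ∈ unitCube d \ trifling d K δ, |g x - f x| ≤ ε) :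
    ∀ x ∈ unitCube d, |midSeq d δ g d x - f x| ≤ ε + d * modCont d f δ := by
  set ω := modCont d f δ with hωdef
  obtain ⟨M, hM⟩ := IsCompact.exists_bound_of_continuousOn (isCompact_Icc) hf
  have hbdd : BddAbove {t | ∃ x ∈ unitCube d, ∃ y ∈ unitCube d,
      Real.sqrt (∑ i, (x i - y i) ^ 2) ≤ δ ∧ t = |f x - f y|} := by
    refine ⟨2 * M, ?_⟩
    rintro t ⟨x, hx, y, hy, -, rfl⟩
    have h1 := hM x hx
    have h2 := hM y hy
    rw [Real.norm_eq_abs] at h1 h2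
    have h3 : |f x - f y| ≤ |f x| + |f y| := by
      simpa [sub_eq_add_neg] using abs_add_le (f x) (-(f y))
    linarith
  have hmem : ∀ x ∈ unitCube d, ∀ y ∈ unitCube d,
      Real.sqrt (∑ i, (x i - y i) ^ 2) ≤ δ → |f x - f y| ≤ ω :=
    fun x hx y hy h => le_csSup hbdd ⟨x, hx, y, hy, h, rfl⟩
  have hcube0 : (0 : Fin d → ℝ) ∈ unitCube d := by
    simp only [unitCube, Set.mem_Icc, Pi.le_def]
    constructor <;> intro i <;> norm_num
  have hω0 : 0 ≤ ω := by
    have := hmem 0 hcube0 0 hcube0 (by simp [hδ0.le])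
    simpa using this
  have main : ∀ i, i ≤ d → ∀ x ∈ unitCube d,
      (∀ j : Fin d, i ≤ (j : ℕ) → Good K δ (x j)) →
      |midSeq d δ g i x - f x| ≤ ε + i * ω := by
    intro i
    induction i with
    | zero =>
      intro _ x hx hgood
      have hnt : x ∉ trifling d K δ := by
        rintro ⟨-, j, k, hk1, hk2, hIoo⟩
        rcases (hgood j (Nat.zero_le _)).2.2 k hk1 hk2 with h | h
        · exact absurd hIoo.1 (not_lt.mpr h)
        · exact absurd hIoo.2 (not_lt.mpr h)
      simpa [midSeq] using hg x ⟨hx, hnt⟩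
    | succ i ih =>
      intro hi x hx hgood
      have hid : i < d := hi
      set I : Fin d := ⟨i, hid⟩ with hIdef
      have hx' : ∀ j : Fin d, 0 ≤ x j ∧ x j ≤ 1 := by
        have h := hx
        simp only [unitCube, Set.mem_Icc, Pi.le_def] at h
        exact fun j => ⟨h.1 j, h.2 j⟩
      have ht0 : 0 ≤ x I := (hx' I).1
      have ht1 : x I ≤ 1 := (hx' I).2
      have key : ∀ y : Fin d → ℝ, (∀ j : Fin d, (j : ℕ) ≠ i → y j = x j) →
          Good K δ (y I) → |y I - x I| ≤ δ →
          f x - (ε + i * ω + ω) ≤ midSeq d δ g i y ∧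
            midSeq d δ g i y ≤ f x + (ε + i * ω + ω) := by
        intro y hyx hgI hdist
        have hyc : y ∈ unitCube d := by
          simp only [unitCube, Set.mem_Icc, Pi.le_def]
          constructor <;> intro j <;> by_cases hji : (j : ℕ) = i
          · have hjI : j = I := Fin.ext hji
            rw [hjI]; exact hgI.1
          · rw [hyx j hji]; exact (hx' j).1
          · have hjI : j = I := Fin.ext hji
            rw [hjI]; exact hgI.2.1
          · rw [hyx j hji]; exact (hx' j).2
        have hygood : ∀ j : Fin d, i ≤ (j : ℕ) → Good K δ (y j) := by
          intro j hj
          by_cases hji : (j : ℕ) = i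
          · have hjI : j = I := Fin.ext hji
            rw [hjI]; exact hgI
          · rw [hyx j hji]; exact hgood j (by omega)
        have h1 := ih (by omega) y hyc hygood
        have hsum : Real.sqrt (∑ j, (y j - x j) ^ 2) ≤ δ := by
          have hs : (∑ j, (y j - x j) ^ 2) = (y I - x I) ^ 2 := by
            rw [Finset.sum_eq_single I]
            · intro j _ hjI
              have hji : (j : ℕ) ≠ i := fun h => hjI (Fin.ext h)
              rw [hyx j hji]; ring
            · simp
          rw [hs, Real.sqrt_sq_eq_abs]
          exact hdist
        have h2 := hmem y hyc x hx hsum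
        have h1' := abs_le.mp h1
        have h2' := abs_le.mp h2
        constructor <;> linarith [h1'.1, h1'.2, h2'.1, h2'.2]
      set ym : Fin d → ℝ := fun j => x j - if (j : ℕ) = i then δ else 0 with hymdef
      set yp : Fin d → ℝ := fun j => x j + if (j : ℕ) = i then δ else 0 with hypdef
      have hymj : ∀ j : Fin d, (j : ℕ) ≠ i → ym j = x j := by
        intro j h; simp [hymdef, h]
      have hypj : ∀ j : Fin d, (j : ℕ) ≠ i → yp j = x j := by
        intro j h; simp [hypdef, h]
      have hymI : ym I = x I - δ := by simp [hymdef, hIdef]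
      have hypI : yp I = x I + δ := by simp [hypdef, hIdef]
      have hmid : midSeq d δ g (i + 1) x
          = mid (midSeq d δ g i ym) (midSeq d δ g i x) (midSeq d δ g i yp) := rfl
      have hBfin : ε + (↑(i + 1) : ℝ) * ω = ε + i * ω + ω := by push_cast; ring
      rw [hmid, abs_le, hBfin]
      have hdm : |ym I - x I| ≤ δ := by
        rw [hymI]
        have : x I - δ - x I = -δ := by ring
        rw [this, abs_neg, abs_of_pos hδ0]
      have hdp : |yp I - x I| ≤ δ := by
        rw [hypI]
        have : x I + δ - x I = δ := by ring
        rw [this, abs_of_pos hδ0]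
      have hd0 : |x I - x I| ≤ δ := by simp [hδ0.le]
      rcases two_good hK hδ0 hδ1 ht0 ht1 with ⟨hg1, hg2⟩ | ⟨hg1, hg2⟩ | ⟨hg1, hg2⟩
      · have ha := key ym hymj (by rw [hymI]; exact hg1) hdm
        have hb := key x (fun j _ => rfl) hg2 hd0
        have h := mid_mem (c := midSeq d δ g i yp) ha.1 ha.2 hb.1 hb.2
        constructor <;> linarith [h.1, h.2]
      · have ha := key ym hymj (by rw [hymI]; exact hg1) hdm
        have hc := key yp hypj (by rw [hypI]; exact hg2) hdp
        rw [mid_swap₂]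
        have h := mid_mem (c := midSeq d δ g i x) ha.1 ha.2 hc.1 hc.2
        constructor <;> linarith [h.1, h.2]
      · have hb := key x (fun j _ => rfl) hg1 hd0
        have hc := key yp hypj (by rw [hypI]; exact hg2) hdp
        rw [mid_swap₁, mid_swap₂]
        have h := mid_mem (c := midSeq d δ g i ym) hb.1 hb.2 hc.1 hc.2
        constructor <;> linarith [h.1, h.2]
  intro x hx
  exact main d le_rfl x hx (fun j hj => absurd j.isLt (not_lt.mpr hj))
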